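/- For positive definite W, Q and real antisymmetric U, T[W] ≤ rank(U) · R, where T[W] = ‖√W Q⁻¹ U Q⁻¹ √W‖₁ / Tr[W Q⁻¹] and R = ‖Q^{-1/2} U Q^{-1/2}‖_∞. -/

import Mathlib

open Matrix

/-- the square root of a psd matrix, as `Matrix.PosSemidef.sqrt` was defined in the older Mathlib -/
noncomputable def psdSqrt {n : ℕ} {A : Matrix (Fin n) (Fin n) ℝ} (hA : A.PosSemidef) :
    Matrix (Fin n) (Fin n) ℝ :=
  (hA.1.eigenvectorUnitary : Matrix (Fin n) (Fin n) ℝ) *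
    diagonal ((↑) ∘ (√·) ∘ hA.1.eigenvalues) * (star hA.1.eigenvectorUnitary : Matrix (Fin n) (Fin n) ℝ)

theorem psdSqrt_isHermitian {n : ℕ} {A : Matrix (Fin n) (Fin n) ℝ} (hA : A.PosSemidef) :
    (psdSqrt hA).IsHermitian := by
  unfold psdSqrt
  rw [show (star hA.1.eigenvectorUnitary : Matrix (Fin n) (Fin n) ℝ) =
    (hA.1.eigenvectorUnitary : Matrix (Fin n) (Fin n) ℝ)ᴴ from rfl]
  exact isHermitian_mul_mul_conjTranspose _ (isHermitian_diagonal_of_self_adjoint _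
    (by ext i; simp))

noncomputable def traceNorm {n : ℕ} (A : Matrix (Fin n) (Fin n) ℝ) : ℝ :=
  (psdSqrt (Matrix.posSemidef_conjTranspose_mul_self A)).trace

noncomputable def singVals {n : ℕ} (A : Matrix (Fin n) (Fin n) ℝ) : Fin n → ℝ :=
  (psdSqrt_isHermitian (Matrix.posSemidef_conjTranspose_mul_self A)).eigenvalues

noncomputable def opNorm {n : ℕ} (A : Matrix (Fin n) (Fin n) ℝ) : ℝ :=
  ⨆ i, singVals A i

/-- the positive semidefinite square root, extended by `0` off psd matrices -/
noncomputable def mySqrt {n : ℕ} (A : Matrix (Fin n) (Fin n) ℝ) : Matrix (Fin n) (Fin n) ℝ :=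
  open Classical in
  if h : A.PosSemidef then psdSqrt h else 0

/-- the weight-dependent incompatibility measure `T[W]` -/
noncomputable def Tmeas {n : ℕ} (W Q U : Matrix (Fin n) (Fin n) ℝ) : ℝ :=
  traceNorm (mySqrt W * Q⁻¹ * U * Q⁻¹ * mySqrt W) / (W * Q⁻¹).trace

/-- the quantumness measure `R` -/
noncomputable def Rmeas {n : ℕ} (Q U : Matrix (Fin n) (Fin n) ℝ) : ℝ :=
  opNorm (mySqrt Q⁻¹ * U * mySqrt Q⁻¹)

lemma psdSqrt_mul_self {n : ℕ} {A : Matrix (Fin n) (Fin n) ℝ} (hA : A.PosSemidef) :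
    psdSqrt hA * psdSqrt hA = A := by
  have h1 : star (hA.1.eigenvectorUnitary : Matrix (Fin n) (Fin n) ℝ) *
      (hA.1.eigenvectorUnitary : Matrix (Fin n) (Fin n) ℝ) = 1 :=
    Matrix.mem_unitaryGroup_iff'.mp hA.1.eigenvectorUnitary.2
  conv_rhs => rw [hA.1.spectral_theorem, Unitary.conjStarAlgAut_apply]
  unfold psdSqrt
  calc _ = (hA.1.eigenvectorUnitary : Matrix (Fin n) (Fin n) ℝ) *
        diagonal ((↑) ∘ (√·) ∘ hA.1.eigenvalues) *
        (star (hA.1.eigenvectorUnitary : Matrix (Fin n) (Fin n) ℝ) *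
          (hA.1.eigenvectorUnitary : Matrix (Fin n) (Fin n) ℝ)) *
        diagonal ((↑) ∘ (√·) ∘ hA.1.eigenvalues) *
        (star hA.1.eigenvectorUnitary : Matrix (Fin n) (Fin n) ℝ) := by
          simp only [Matrix.mul_assoc]
    _ = _ := by
      rw [h1, Matrix.mul_one, Matrix.mul_assoc _ (diagonal _) (diagonal _),
        Matrix.diagonal_mul_diagonal]
      congr 3
      funext i
      simp [Real.mul_self_sqrt (hA.eigenvalues_nonneg i)]

lemma psdSqrt_posSemidef {n : ℕ} {A : Matrix (Fin n) (Fin n) ℝ} (hA : A.PosSemidef) :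
    (psdSqrt hA).PosSemidef := by
  unfold psdSqrt
  rw [show (star hA.1.eigenvectorUnitary : Matrix (Fin n) (Fin n) ℝ) =
    (hA.1.eigenvectorUnitary : Matrix (Fin n) (Fin n) ℝ)ᴴ from rfl]
  refine PosSemidef.mul_mul_conjTranspose_same ?_ _
  rw [posSemidef_diagonal_iff]
  intro i
  simp [Real.sqrt_nonneg]

section Aux

open Finset

variable {n : ℕ}

lemma aux_trace_ct_mul (A : Matrix (Fin n) (Fin n) ℝ) :
    (Aᴴ * A).trace = ∑ i, ∑ j, (A j i)^2 := by
  simp [Matrix.trace, Matrix.diag, Matrix.mul_apply, Matrix.conjTranspose_apply, sq]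

lemma aux_frob_mul_le (A B : Matrix (Fin n) (Fin n) ℝ) :
    ((A*B)ᴴ * (A*B)).trace ≤ (Aᴴ*A).trace * (Bᴴ*B).trace := by
  rw [aux_trace_ct_mul, aux_trace_ct_mul, aux_trace_ct_mul]
  calc ∑ i, ∑ j, ((A*B) j i)^2
      ≤ ∑ i, ∑ j, (∑ k, (A j k)^2) * (∑ k, (B k i)^2) := by
        refine Finset.sum_le_sum fun i _ => Finset.sum_le_sum fun j _ => ?_
        rw [Matrix.mul_apply]
        exact Finset.sum_mul_sq_le_sq_mul_sq univ (fun k => A j k) (fun k => B k i)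
    _ = (∑ j, ∑ k, (A j k)^2) * (∑ i, ∑ k, (B k i)^2) := by
        rw [Finset.sum_comm (s := univ) (t := univ)
          (f := fun i j => (∑ k, (A j k)^2) * (∑ k, (B k i)^2))]
        rw [Finset.sum_mul_sum]
    _ = (∑ i, ∑ j, (A j i)^2) * (∑ i, ∑ j, (B j i)^2) := by
        rw [Finset.sum_comm (s := univ) (t := univ) (f := fun j k => (A j k)^2)]

lemma aux_trace_eq_sum_eigs {A : Matrix (Fin n) (Fin n) ℝ} (hA : A.IsHermitian) :
    A.trace = ∑ i, hA.eigenvalues i := by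
  have h1 : star (hA.eigenvectorUnitary : Matrix (Fin n) (Fin n) ℝ) *
      (hA.eigenvectorUnitary : Matrix (Fin n) (Fin n) ℝ) = 1 :=
    Matrix.mem_unitaryGroup_iff'.mp hA.eigenvectorUnitary.2
  conv_lhs => rw [hA.spectral_theorem, Unitary.conjStarAlgAut_apply]
  rw [Matrix.trace_mul_cycle, h1, one_mul, Matrix.trace_diagonal]
  simp

lemma aux_trace_sq_eq_sum_sq {A : Matrix (Fin n) (Fin n) ℝ} (hA : A.IsHermitian) :
    (A*A).trace = ∑ i, hA.eigenvalues i ^ 2 := by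
  set V : Matrix (Fin n) (Fin n) ℝ := (hA.eigenvectorUnitary : Matrix (Fin n) (Fin n) ℝ) with hV
  set D : Matrix (Fin n) (Fin n) ℝ := diagonal (RCLike.ofReal ∘ hA.eigenvalues) with hD
  have h1 : star V * V = 1 := Matrix.mem_unitaryGroup_iff'.mp hA.eigenvectorUnitary.2
  have h2 : A = V * D * star V := hA.spectral_theorem
  have h3 : A * A = V * (D * D) * star V := by
    rw [h2]
    calc V * D * star V * (V * D * star V) = V * D * (star V * V) * D * star V := by
          simp only [Matrix.mul_assoc]
      _ = V * (D * D) * star V := by rw [h1]; simp only [Matrix.mul_one, Matrix.mul_assoc]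
  rw [h3, Matrix.trace_mul_cycle, h1, one_mul, hD, Matrix.diagonal_mul_diagonal,
    Matrix.trace_diagonal]
  simp [sq]

lemma aux_psd_trace_nonneg {A : Matrix (Fin n) (Fin n) ℝ} (hA : A.PosSemidef) :
    0 ≤ A.trace := by
  rw [aux_trace_eq_sum_eigs hA.1]
  exact Finset.sum_nonneg fun i _ => hA.eigenvalues_nonneg i

lemma aux_psd_trace_sq_le {A : Matrix (Fin n) (Fin n) ℝ} (hA : A.PosSemidef) :
    A.trace ^ 2 ≤ (A.rank : ℝ) * (A*A).trace := by
  classical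
  rw [aux_trace_eq_sum_eigs hA.1, aux_trace_sq_eq_sum_sq hA.1, hA.1.rank_eq_card_non_zero_eigs]
  set f := hA.1.eigenvalues with hf
  set s : Finset (Fin n) := univ.filter (fun i => f i ≠ 0) with hs
  have h1 : ∑ i, f i = ∑ i ∈ s, f i := (Finset.sum_filter_ne_zero _).symm
  have h2 : (Fintype.card {i // f i ≠ 0} : ℝ) = (s.card : ℝ) := by
    rw [Fintype.card_subtype]
  rw [h1, h2]
  calc (∑ i ∈ s, f i)^2 ≤ (s.card : ℝ) * ∑ i ∈ s, f i^2 := sq_sum_le_card_mul_sum_sq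
    _ ≤ (s.card : ℝ) * ∑ i, f i ^2 := by
        refine mul_le_mul_of_nonneg_left ?_ (by positivity)
        exact Finset.sum_le_sum_of_subset_of_nonneg (Finset.subset_univ s)
          (fun i _ _ => sq_nonneg _)

lemma aux_psd_trace_mul_sq_le {A : Matrix (Fin n) (Fin n) ℝ} (hA : A.PosSemidef) :
    (A*A).trace ≤ (A.rank : ℝ) * (⨆ i, hA.1.eigenvalues i)^2 := by
  classical
  rw [aux_trace_sq_eq_sum_sq hA.1, hA.1.rank_eq_card_non_zero_eigs]
  set f := hA.1.eigenvalues with hf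
  set s : Finset (Fin n) := univ.filter (fun i => f i ≠ 0) with hs
  set R := ⨆ i, f i with hR
  have hfR : ∀ i, f i ≤ R := fun i =>
    le_ciSup (Set.Finite.bddAbove (Set.finite_range f)) i
  have h1 : ∑ i, f i ^ 2 = ∑ i ∈ s, f i ^ 2 := by
    rw [hs]
    exact (Finset.sum_filter_of_ne (fun i _ h => by
      intro h0; exact h (by rw [h0]; ring))).symm
  have h2 : (Fintype.card {i // f i ≠ 0} : ℝ) = (s.card : ℝ) := by
    rw [Fintype.card_subtype]
  rw [h1, h2]
  have h3 : ∀ i ∈ s, f i ^ 2 ≤ R ^ 2 := fun i _ =>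
    pow_le_pow_left₀ (hA.eigenvalues_nonneg i) (hfR i) 2
  calc ∑ i ∈ s, f i ^ 2 ≤ s.card • (R^2) := Finset.sum_le_card_nsmul s _ _ h3
    _ = (s.card : ℝ) * R^2 := nsmul_eq_mul _ _

lemma aux_trace_mul_psd_le {G P : Matrix (Fin n) (Fin n) ℝ}
    (hG : G.PosSemidef) (hP : P.PosSemidef) : (G*P).trace ≤ G.trace * P.trace := by
  set g := (psdSqrt hG) with hgdef
  set p := (psdSqrt hP) with hpdef
  have hg : g * g = G := (psdSqrt_mul_self hG)
  have hp : p * p = P := (psdSqrt_mul_self hP)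
  have hgh : gᴴ = g := (psdSqrt_posSemidef hG).1
  have hph : pᴴ = p := (psdSqrt_posSemidef hP).1
  have key : (G*P).trace = ((g*p)ᴴ * (g*p)).trace := by
    have e : (g*p)ᴴ * (g*p) = p * (G * p) := by
      rw [Matrix.conjTranspose_mul, hgh, hph, ← hg]
      simp only [Matrix.mul_assoc]
    rw [e, Matrix.trace_mul_comm p (G*p), Matrix.mul_assoc, hp]
  rw [key]
  calc ((g*p)ᴴ * (g*p)).trace ≤ (gᴴ*g).trace * (pᴴ*p).trace := aux_frob_mul_le g p
    _ = G.trace * P.trace := by rw [hgh, hph, hg, hp]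

lemma aux_traceNorm_nonneg (X : Matrix (Fin n) (Fin n) ℝ) : 0 ≤ traceNorm X :=
  aux_psd_trace_nonneg (psdSqrt_posSemidef (Matrix.posSemidef_conjTranspose_mul_self X))

lemma aux_opNorm_nonneg [Nonempty (Fin n)] (X : Matrix (Fin n) (Fin n) ℝ) :
    0 ≤ opNorm X :=
  le_ciSup_of_le (Set.Finite.bddAbove (Set.finite_range _)) (Classical.arbitrary _)
    ((psdSqrt_posSemidef (Matrix.posSemidef_conjTranspose_mul_self X)).eigenvalues_nonneg _)

lemma aux_traceNorm_sq_le (X : Matrix (Fin n) (Fin n) ℝ) :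
    (traceNorm X)^2 ≤ (X.rank : ℝ) * (Xᴴ*X).trace := by
  have hSpsd : (psdSqrt (Matrix.posSemidef_conjTranspose_mul_self X)).PosSemidef :=
    (psdSqrt_posSemidef (Matrix.posSemidef_conjTranspose_mul_self X))
  have hSS : (psdSqrt (Matrix.posSemidef_conjTranspose_mul_self X)) *
      (psdSqrt (Matrix.posSemidef_conjTranspose_mul_self X)) = Xᴴ * X :=
    (psdSqrt_mul_self (Matrix.posSemidef_conjTranspose_mul_self X))
  have h1 : (psdSqrt (Matrix.posSemidef_conjTranspose_mul_self X)).rank = X.rank := by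
    rw [← Matrix.rank_conjTranspose_mul_self (psdSqrt (Matrix.posSemidef_conjTranspose_mul_self X)),
      hSpsd.1, hSS, Matrix.rank_conjTranspose_mul_self]
  calc (traceNorm X)^2
      ≤ ((psdSqrt (Matrix.posSemidef_conjTranspose_mul_self X)).rank : ℝ) *
        ((psdSqrt (Matrix.posSemidef_conjTranspose_mul_self X)) *
         (psdSqrt (Matrix.posSemidef_conjTranspose_mul_self X))).trace := aux_psd_trace_sq_le hSpsd
    _ = (X.rank : ℝ) * (Xᴴ*X).trace := by rw [hSS, h1]

lemma aux_ct_mul_trace_le (X : Matrix (Fin n) (Fin n) ℝ) :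
    (Xᴴ*X).trace ≤ (X.rank : ℝ) * (opNorm X)^2 := by
  have hSpsd : (psdSqrt (Matrix.posSemidef_conjTranspose_mul_self X)).PosSemidef :=
    (psdSqrt_posSemidef (Matrix.posSemidef_conjTranspose_mul_self X))
  have hSS : (psdSqrt (Matrix.posSemidef_conjTranspose_mul_self X)) *
      (psdSqrt (Matrix.posSemidef_conjTranspose_mul_self X)) = Xᴴ * X :=
    (psdSqrt_mul_self (Matrix.posSemidef_conjTranspose_mul_self X))
  have h1 : (psdSqrt (Matrix.posSemidef_conjTranspose_mul_self X)).rank = X.rank := by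
    rw [← Matrix.rank_conjTranspose_mul_self (psdSqrt (Matrix.posSemidef_conjTranspose_mul_self X)),
      hSpsd.1, hSS, Matrix.rank_conjTranspose_mul_self]
  have h2 : opNorm X = ⨆ i, hSpsd.1.eigenvalues i := rfl
  calc (Xᴴ*X).trace
      = ((psdSqrt (Matrix.posSemidef_conjTranspose_mul_self X)) *
         (psdSqrt (Matrix.posSemidef_conjTranspose_mul_self X))).trace := by rw [hSS]
    _ ≤ ((psdSqrt (Matrix.posSemidef_conjTranspose_mul_self X)).rank : ℝ) *
        (⨆ i, hSpsd.1.eigenvalues i)^2 := aux_psd_trace_mul_sq_le hSpsd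
    _ = (X.rank : ℝ) * (opNorm X)^2 := by rw [h1, h2]

end Aux

set_option maxHeartbeats 1000000 in
/-- T[W] ≤ rank(U) · R. -/
theorem Tmeas_le_rank_mul_Rmeas {n : ℕ} (W Q U : Matrix (Fin n) (Fin n) ℝ)
    (hW : W.PosDef) (hQ : Q.PosDef) (hU : Uᵀ = -U) :
    Tmeas W Q U ≤ (U.rank : ℝ) * Rmeas Q U := by
  rcases Nat.eq_zero_or_pos n with hn | hn
  · subst hn
    rw [Tmeas, Matrix.trace_eq_zero_of_isEmpty, div_zero, Rmeas, opNorm,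
      Real.iSup_of_isEmpty, mul_zero]
  · have hne : Nonempty (Fin n) := ⟨⟨0, hn⟩⟩
    have hQi : (Q⁻¹).PosDef := hQ.inv
    have hQis : (Q⁻¹).PosSemidef := hQi.posSemidef
    have hWs : W.PosSemidef := hW.posSemidef
    obtain ⟨s, hms, hss, hsh, hdets⟩ :
        ∃ s : Matrix (Fin n) (Fin n) ℝ,
          mySqrt Q⁻¹ = s ∧ s * s = Q⁻¹ ∧ sᴴ = s ∧ s.det ≠ 0 := by
      refine ⟨(psdSqrt hQis), dif_pos hQis, (psdSqrt_mul_self hQis), (psdSqrt_posSemidef hQis).1, fun h => ?_⟩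
      have e : (Q⁻¹).det = 0 := by rw [← (psdSqrt_mul_self hQis), Matrix.det_mul, h, mul_zero]
      exact hQi.det_pos.ne' e
    obtain ⟨w, hmw, hww, hwh, hdetw⟩ :
        ∃ w : Matrix (Fin n) (Fin n) ℝ,
          mySqrt W = w ∧ w * w = W ∧ wᴴ = w ∧ w.det ≠ 0 := by
      refine ⟨(psdSqrt hWs), dif_pos hWs, (psdSqrt_mul_self hWs), (psdSqrt_posSemidef hWs).1, fun h => ?_⟩
      have e : W.det = 0 := by rw [← (psdSqrt_mul_self hWs), Matrix.det_mul, h, mul_zero]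
      exact hW.det_pos.ne' e
    set A : Matrix (Fin n) (Fin n) ℝ := w * s with hA_def
    set Mm : Matrix (Fin n) (Fin n) ℝ := s * U * s with hMm_def
    set Bm : Matrix (Fin n) (Fin n) ℝ := A * Mm * Aᴴ with hBm_def
    have hAH : Aᴴ = s * w := by rw [hA_def, Matrix.conjTranspose_mul, hsh, hwh]
    have hB : mySqrt W * Q⁻¹ * U * Q⁻¹ * mySqrt W = Bm := by
      rw [hmw, hBm_def, hAH, hA_def, hMm_def, ← hss]
      simp only [Matrix.mul_assoc]
    have hG : (Aᴴ * A).PosSemidef := Matrix.posSemidef_conjTranspose_mul_self A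
    have hDG : (W * Q⁻¹).trace = (Aᴴ * A).trace := by
      have e : Aᴴ * A = s * (W * s) := by
        rw [hAH, hA_def, ← hww]
        simp only [Matrix.mul_assoc]
      rw [e, Matrix.trace_mul_comm s (W*s), Matrix.mul_assoc, hss]
    -- positivity of the denominator
    have hdetA : A.det ≠ 0 := by rw [hA_def, Matrix.det_mul]; exact mul_ne_zero hdetw hdets
    have hAne : A ≠ 0 := fun h => hdetA (by rw [h]; exact Matrix.det_zero)
    obtain ⟨a, b, hab⟩ : ∃ a b, A a b ≠ 0 := by
      by_contra h
      push_neg at h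
      exact hAne (by ext i j; simpa using h i j)
    have hDpos : 0 < (Aᴴ * A).trace := by
      rw [aux_trace_ct_mul]
      refine Finset.sum_pos' (fun i _ => Finset.sum_nonneg fun j _ => sq_nonneg _)
        ⟨b, Finset.mem_univ b, ?_⟩
      refine Finset.sum_pos' (fun j _ => sq_nonneg _) ⟨a, Finset.mem_univ a, ?_⟩
      exact lt_of_le_of_ne (sq_nonneg _) (Ne.symm (pow_ne_zero 2 hab))
    have hR_eq : Rmeas Q U = opNorm Mm := by rw [Rmeas, hms, ← hMm_def]
    have hRnn : 0 ≤ Rmeas Q U := by rw [hR_eq]; exact aux_opNorm_nonneg Mm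
    have hrankMm : (Mm.rank : ℝ) ≤ (U.rank : ℝ) := by
      have h2 : Mm.rank ≤ U.rank := by
        rw [hMm_def]
        exact le_trans (Matrix.rank_mul_le_left _ _) (Matrix.rank_mul_le_right _ _)
      exact_mod_cast h2
    have hMMle : (Mmᴴ * Mm).trace ≤ (U.rank : ℝ) * (Rmeas Q U)^2 := by
      rw [hR_eq]
      calc (Mmᴴ * Mm).trace ≤ (Mm.rank : ℝ) * (opNorm Mm)^2 := aux_ct_mul_trace_le Mm
        _ ≤ (U.rank : ℝ) * (opNorm Mm)^2 :=
            mul_le_mul_of_nonneg_right hrankMm (sq_nonneg _)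
    have hrankBm : (Bm.rank : ℝ) ≤ (U.rank : ℝ) := by
      have h2 : Bm.rank ≤ U.rank := by
        rw [hBm_def]
        calc (A * Mm * Aᴴ).rank ≤ (A * Mm).rank := Matrix.rank_mul_le_left _ _
          _ ≤ Mm.rank := Matrix.rank_mul_le_right _ _
          _ ≤ (s * U).rank := by rw [hMm_def]; exact Matrix.rank_mul_le_left _ _
          _ ≤ U.rank := Matrix.rank_mul_le_right _ _
      exact_mod_cast h2
    have hPsd1 : (Mm * (Aᴴ*A) * Mmᴴ).PosSemidef := hG.mul_mul_conjTranspose_same Mm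
    have hPsd2 : (Mmᴴ * Mm).PosSemidef := Matrix.posSemidef_conjTranspose_mul_self Mm
    have hBBtr : (Bmᴴ * Bm).trace = ((Aᴴ*A) * (Mm * (Aᴴ*A) * Mmᴴ)).trace := by
      have e : Bmᴴ * Bm = (A*Mmᴴ) * ((Aᴴ*A) * (Mm*Aᴴ)) := by
        rw [hBm_def]
        simp only [Matrix.conjTranspose_mul, Matrix.conjTranspose_conjTranspose,
          Matrix.mul_assoc]
      have e3 : (Aᴴ*A) * (Mm*Aᴴ) * (A*Mmᴴ) = (Aᴴ*A) * (Mm*(Aᴴ*A)*Mmᴴ) := by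
        simp only [Matrix.mul_assoc]
      rw [e, Matrix.trace_mul_comm, e3]
    have hc2 : (Mm * (Aᴴ*A) * Mmᴴ).trace = ((Aᴴ*A) * (Mmᴴ*Mm)).trace := by
      rw [Matrix.trace_mul_cycle Mm (Aᴴ*A) Mmᴴ, Matrix.trace_mul_comm (Mmᴴ*Mm) (Aᴴ*A)]
    set Dt : ℝ := (Aᴴ*A).trace with hDt_def
    have hDnn : 0 ≤ Dt := le_of_lt hDpos
    have hrnn : (0:ℝ) ≤ (U.rank : ℝ) := Nat.cast_nonneg _
    have htrBBnn : 0 ≤ (Bmᴴ*Bm).trace :=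
      aux_psd_trace_nonneg (Matrix.posSemidef_conjTranspose_mul_self Bm)
    have key2 : (Bmᴴ*Bm).trace ≤ Dt * (Dt * ((U.rank:ℝ) * (Rmeas Q U)^2)) := by
      rw [hBBtr]
      calc ((Aᴴ*A) * (Mm*(Aᴴ*A)*Mmᴴ)).trace ≤ Dt * (Mm*(Aᴴ*A)*Mmᴴ).trace :=
            aux_trace_mul_psd_le hG hPsd1
        _ = Dt * ((Aᴴ*A) * (Mmᴴ*Mm)).trace := by rw [hc2]
        _ ≤ Dt * (Dt * (Mmᴴ*Mm).trace) :=
            mul_le_mul_of_nonneg_left (aux_trace_mul_psd_le hG hPsd2) hDnn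
        _ ≤ Dt * (Dt * ((U.rank:ℝ) * (Rmeas Q U)^2)) :=
            mul_le_mul_of_nonneg_left (mul_le_mul_of_nonneg_left hMMle hDnn) hDnn
    have key : (traceNorm Bm)^2 ≤ ((U.rank:ℝ) * Rmeas Q U * Dt)^2 := by
      calc (traceNorm Bm)^2 ≤ (Bm.rank : ℝ) * (Bmᴴ*Bm).trace := aux_traceNorm_sq_le Bm
        _ ≤ (U.rank:ℝ) * (Bmᴴ*Bm).trace := mul_le_mul_of_nonneg_right hrankBm htrBBnn
        _ ≤ (U.rank:ℝ) * (Dt * (Dt * ((U.rank:ℝ) * (Rmeas Q U)^2))) :=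
            mul_le_mul_of_nonneg_left key2 hrnn
        _ = ((U.rank:ℝ) * Rmeas Q U * Dt)^2 := by ring
    have hNnn : 0 ≤ traceNorm Bm := aux_traceNorm_nonneg Bm
    have hfin : traceNorm Bm ≤ (U.rank:ℝ) * Rmeas Q U * Dt := by
      have h := Real.sqrt_le_sqrt key
      rwa [Real.sqrt_sq hNnn,
        Real.sqrt_sq (mul_nonneg (mul_nonneg hrnn hRnn) hDnn)] at h
    rw [Tmeas, hB, hDG]
    exact (div_le_iff₀ hDpos).mpr hfin
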